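/- The map Rep from directed subgraphs of G to their reachability matrices is injective, hence a bijection onto its image MatRep(G). -/

import Mathlib

namespace GGNN

variable {V : Type*} (G : SimpleGraph V)

/-- A directed edge of the graph `G`: an ordered pair of adjacent vertices. -/
abbrev DEdge := {p : V × V // G.Adj p.1 p.2}

/-- `l` is a (direction-respecting) path whose edges all lie in `E`:
it is a nonempty list of directed edges of `E` in which consecutive edges are
composable. -/
def IsPathIn (E : Finset (DEdge G)) (l : List (DEdge G)) : Prop :=
  l ≠ [] ∧ l.Chain' (fun d e => d.1.2 = e.1.1) ∧ ∀ e ∈ l, e ∈ E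

/-- The path `l` starts at the vertex `v`. -/
def startsAt (l : List (DEdge G)) (v : V) : Prop :=
  ∃ e, l.head? = some e ∧ e.1.1 = v

/-- The path `l` ends at the vertex `v`. -/
def endsAt (l : List (DEdge G)) (v : V) : Prop :=
  ∃ e, l.getLast? = some e ∧ e.1.2 = v

/-- A directed subgraph of `G`: a finite set of directed edges of `G` that is
connected (as an undirected subgraph), and acyclic with at most one directed
path between any two nodes. -/
structure DirSub where
  edges : Finset (DEdge G)
  connected : ∀ v w : V, (∃ e ∈ edges, e.1.1 = v ∨ e.1.2 = v) →
      (∃ e ∈ edges, e.1.1 = w ∨ e.1.2 = w) →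
      Relation.ReflTransGen
        (fun a b => ∃ e ∈ edges, (e.1.1 = a ∧ e.1.2 = b) ∨ (e.1.1 = b ∧ e.1.2 = a)) v w
  uniquePath : ∀ (v w : V) (l₁ l₂ : List (DEdge G)),
      IsPathIn G edges l₁ → IsPathIn G edges l₂ →
      startsAt G l₁ v → startsAt G l₂ v → endsAt G l₁ w → endsAt G l₂ w → l₁ = l₂
  acyclic : ∀ (v : V) (l : List (DEdge G)),
      IsPathIn G edges l → startsAt G l v → ¬ endsAt G l v

/-- `v ≤_D w`: there is a direction-respecting path in `D` from `v` to `w`. -/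
def Reaches (D : DirSub G) (v w : V) : Prop :=
  ∃ l, IsPathIn G D.edges l ∧ startsAt G l v ∧ endsAt G l w

open scoped Classical in
/-- The reachability (matrix representation) matrix `Rep(D)` of a directed
subgraph: entry `(v, w)` is `1` if `v ≤_D w` and `0` otherwise. -/
noncomputable def Rep [Fintype V] (D : DirSub G) : Matrix V V ℝ :=
  Matrix.of fun v w => if Reaches G D v w then 1 else 0

/-- An edge is in `D` iff its tail reaches its head with no strictly
intermediate reachable vertex. -/
lemma mem_edges_iff (D : DirSub G) (e : DEdge G) :
    e ∈ D.edges ↔ Reaches G D e.1.1 e.1.2 ∧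
      ∀ u, ¬(Reaches G D e.1.1 u ∧ Reaches G D u e.1.2) := by
  constructor
  · intro he
    have hreach : Reaches G D e.1.1 e.1.2 :=
      ⟨[e], ⟨by simp, List.isChain_singleton _, by simpa using he⟩,
        ⟨e, rfl, rfl⟩, ⟨e, rfl, rfl⟩⟩
    refine ⟨hreach, ?_⟩
    rintro u ⟨⟨l₁, hp₁, hs₁, he₁⟩, ⟨l₂, hp₂, hs₂, he₂⟩⟩
    -- concatenate the two paths
    have hne₁ := hp₁.1
    have hne₂ := hp₂.1
    have hchain : (l₁ ++ l₂).Chain' (fun d e => d.1.2 = e.1.1) := by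
      refine List.IsChain.append hp₁.2.1 hp₂.2.1 ?_
      intro x hx y hy
      obtain ⟨a, ha, ha2⟩ := he₁
      obtain ⟨b, hb, hb1⟩ := hs₂
      rw [hx] at ha; rw [hy] at hb
      cases ha; cases hb
      rw [ha2, hb1]
    have hpath : IsPathIn G D.edges (l₁ ++ l₂) := by
      refine ⟨by simp [hne₁], hchain, ?_⟩
      intro x hx
      rcases List.mem_append.mp hx with h | h
      · exact hp₁.2.2 x h
      · exact hp₂.2.2 x h
    have hstart : startsAt G (l₁ ++ l₂) e.1.1 := by
      obtain ⟨a, ha, ha1⟩ := hs₁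
      exact ⟨a, by rw [List.head?_append_of_ne_nil _ hne₁]; exact ha, ha1⟩
    have hend : endsAt G (l₁ ++ l₂) e.1.2 := by
      obtain ⟨a, ha, ha2⟩ := he₂
      exact ⟨a, by rw [List.getLast?_append_of_ne_nil _ hne₂]; exact ha, ha2⟩
    have huniq := D.uniquePath e.1.1 e.1.2 (l₁ ++ l₂) [e] hpath
      ⟨by simp, List.isChain_singleton _, by simpa using he⟩ hstart ⟨e, rfl, rfl⟩ hend ⟨e, rfl, rfl⟩
    have hlen : (l₁ ++ l₂).length = 1 := by rw [huniq]; rfl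
    rw [List.length_append] at hlen
    have h1 : 1 ≤ l₁.length := List.length_pos_iff.mpr hne₁
    have h2 : 1 ≤ l₂.length := List.length_pos_iff.mpr hne₂
    omega
  · rintro ⟨⟨l, hp, hs, he⟩, hmid⟩
    match l, hp.1 with
    | [e'], _ =>
      obtain ⟨a, ha, ha1⟩ := hs
      obtain ⟨b, hb, hb2⟩ := he
      cases ha; cases hb
      have : e' = e := Subtype.ext (Prod.ext ha1 hb2)
      rw [← this]
      simpa using hp.2.2 e' (by simp)
    | e₀ :: e₁ :: rest, _ =>
      exfalso
      apply hmid e₀.1.2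
      obtain ⟨a, ha, ha1⟩ := hs
      cases ha
      constructor
      · refine ⟨[e₀], ⟨by simp, List.isChain_singleton _, ?_⟩, ⟨e₀, rfl, ha1⟩, ⟨e₀, rfl, rfl⟩⟩
        intro x hx
        rw [List.mem_singleton] at hx
        subst hx
        exact hp.2.2 _ (by simp)
      · refine ⟨e₁ :: rest, ⟨by simp, ?_, ?_⟩, ?_, ?_⟩
        · exact (List.isChain_cons.mp hp.2.1).2
        · intro x hx; exact hp.2.2 x (List.mem_cons_of_mem _ hx)
        · have hlink : e₀.1.2 = e₁.1.1 :=
            (List.isChain_cons_cons.mp hp.2.1).1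
          exact ⟨e₁, rfl, hlink.symm⟩
        · obtain ⟨b, hb, hb2⟩ := he
          refine ⟨b, ?_, hb2⟩
          rwa [List.getLast?_cons_cons] at hb

lemma edges_injective : Function.Injective (DirSub.edges (G := G)) := by
  rintro ⟨E₁, c₁, u₁, a₁⟩ ⟨E₂, c₂, u₂, a₂⟩ h
  simp only at h
  subst h
  rfl

/-- The map `Rep`, sending a directed subgraph of `G` to its reachability
matrix, is injective; hence it is a bijection onto its image `MatRep(G)`. -/
theorem rep_injective [Fintype V] :
    Function.Injective (Rep G) ∧
    Set.BijOn (Rep G) Set.univ (Set.range (Rep G)) := by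
  classical
  have hinj : Function.Injective (Rep G) := by
    intro D₁ D₂ h
    have hR : ∀ v w, Reaches G D₁ v w ↔ Reaches G D₂ v w := by
      intro v w
      have := congrFun (congrFun h v) w
      simp only [Rep, Matrix.of_apply] at this
      by_cases h₁ : Reaches G D₁ v w <;> by_cases h₂ : Reaches G D₂ v w <;>
        simp_all
    apply edges_injective
    ext e
    rw [mem_edges_iff, mem_edges_iff]
    simp only [hR]
  refine ⟨hinj, ?_, ?_, ?_⟩
  · intro D _; exact Set.mem_range_self D
  · intro x _ y _ h; exact hinj h
  · rintro _ ⟨D, rfl⟩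
    exact ⟨D, Set.mem_univ D, rfl⟩

end GGNN
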